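/- There exists a unique group homomorphism ϖ : B_n → ℤ^n ⋊ S_n with ϖ(σ_k) = (e_k + e_{k+1}, (k, k+1)) for every k ∈ {1,…,n−1}. Moreover, composing ϖ with the injective homomorphism ι : ℤ^n ⋊ S_n → Perm({1,…,n} × ℤ), ι(ℓ, π)(a, b) = (π(a), b + ℓ(π(a))), yields the symmetric Gauss-Epple homomorphism symGE, i.e. ι ∘ ϖ is the homomorphism sending σ_k to the permutation fixing (a,b) when a ∉ {k,k+1}, sending (k,b) to (k+1,b+1), and sending (k+1,b) to (k,b+1). -/

import Mathlib

/-- The braid relations. -/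
def braidRels (n : ℕ) : Set (FreeGroup (Fin (n - 1))) :=
  {r | (∃ i j : Fin (n - 1), (j : ℕ) = (i : ℕ) + 1 ∧
        r = .of i * .of j * .of i * (.of j * .of i * .of j)⁻¹) ∨
       (∃ i j : Fin (n - 1), (i : ℕ) + 2 ≤ (j : ℕ) ∧
        r = .of i * .of j * (.of j * .of i)⁻¹)}

/-- The braid group `B_n`. -/
abbrev BraidGroup (n : ℕ) := PresentedGroup (braidRels n)

/-- The Artin generator `σ_{k+1}` (0-based index `k`). -/
def braidGen {n : ℕ} (i : Fin (n - 1)) : BraidGroup n := PresentedGroup.of i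

/-- The strand index `k`, viewed inside `Fin n`. -/
def lo {n : ℕ} (k : Fin (n - 1)) : Fin n := ⟨k, by have := k.isLt; omega⟩

/-- The strand index `k + 1`, viewed inside `Fin n`. -/
def hi {n : ℕ} (k : Fin (n - 1)) : Fin n := ⟨(k : ℕ) + 1, by have := k.isLt; omega⟩

/-- The action of `S_n` on `ℤ^n` by permuting coordinates: `(π·ℓ)(i) = ℓ(π⁻¹ i)`. -/
def permAct (n : ℕ) : Equiv.Perm (Fin n) →* MulAut (Multiplicative (Fin n → ℤ)) where
  toFun π :=
    { toFun := fun ℓ => Multiplicative.ofAdd fun i => Multiplicative.toAdd ℓ (π⁻¹ i)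
      invFun := fun ℓ => Multiplicative.ofAdd fun i => Multiplicative.toAdd ℓ (π i)
      left_inv := fun ℓ => by simp
      right_inv := fun ℓ => by simp
      map_mul' := fun ℓ ℓ' => rfl }
  map_one' := by ext ℓ; simp
  map_mul' := fun π ρ => by
    ext ℓ
    simp [Equiv.Perm.mul_apply]

/-- The semidirect product `ℤ^n ⋊ S_n`. -/
abbrev GEGroup (n : ℕ) :=
  SemidirectProduct (Multiplicative (Fin n → ℤ)) (Equiv.Perm (Fin n)) (permAct n)

/-- The value `(e_k, (k, k+1))` of the Gauss-Epple homomorphism `ς` on the generator `σ_k`. -/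
def ςGen {n : ℕ} (k : Fin (n - 1)) : GEGroup n :=
  ⟨Multiplicative.ofAdd (Pi.single (lo k) 1), Equiv.swap (lo k) (hi k)⟩

/-- The symmetric Gauss-Epple permutation attached to `σ_k`: it fixes `(a,b)` for
`a ∉ {k, k+1}`, sends `(k,b)` to `(k+1, b+1)` and `(k+1, b)` to `(k, b+1)`. -/
def symGeFun {n : ℕ} (k : Fin (n - 1)) (p : Fin n × ℤ) : Fin n × ℤ :=
  if p.1 = lo k then (hi k, p.2 + 1)
  else if p.1 = hi k then (lo k, p.2 + 1)
  else p

/-- The value `(e_k + e_{k+1}, (k, k+1))` of the symmetric Gauss-Epple homomorphism `ϖ`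
on the generator `σ_k`. -/
def ϖGen {n : ℕ} (k : Fin (n - 1)) : GEGroup n :=
  ⟨Multiplicative.ofAdd (Pi.single (lo k) 1 + Pi.single (hi k) 1),
    Equiv.swap (lo k) (hi k)⟩

/-- There is a unique homomorphism `ϖ : B_n → ℤ^n ⋊ S_n` with
`ϖ(σ_k) = (e_k + e_{k+1}, (k,k+1))`; composing with the injective homomorphism
`ι(ℓ,π)(a,b) = (π a, b + ℓ(π a))` yields the symmetric Gauss-Epple homomorphism. -/
lemma permAct_apply {n : ℕ} (π : Equiv.Perm (Fin n)) (ℓ : Multiplicative (Fin n → ℤ)) (t : Fin n) :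
    Multiplicative.toAdd (permAct n π ℓ) t = Multiplicative.toAdd ℓ (π⁻¹ t) := rfl

lemma permAct_single {n : ℕ} (π : Equiv.Perm (Fin n)) (a : Fin n) (v : ℤ) :
    permAct n π (Multiplicative.ofAdd (Pi.single a v)) =
      Multiplicative.ofAdd (Pi.single (π a) v) := by
  apply Multiplicative.toAdd.injective
  funext t
  rw [permAct_apply]
  simp only [toAdd_ofAdd, Pi.single_apply]
  congr 1
  simp [Equiv.Perm.inv_eq_iff_eq, Equiv.symm_apply_eq]

lemma permAct_single_add {n : ℕ} (π : Equiv.Perm (Fin n)) (a b : Fin n) :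
    permAct n π (Multiplicative.ofAdd (Pi.single a 1 + Pi.single b 1)) =
      Multiplicative.ofAdd (Pi.single (π a) 1 + Pi.single (π b) 1) := by
  rw [ofAdd_add, map_mul, permAct_single, permAct_single, ← ofAdd_add]

open Equiv in
lemma swap_braid {α : Type*} [DecidableEq α] {a b c : α} (hab : a ≠ b) (hac : a ≠ c) (hbc : b ≠ c) :
    swap a b * swap b c * swap a b = swap b c * swap a b * swap b c := by
  calc swap a b * swap b c * swap a b = swap b a * swap c b * swap b a := by
        rw [swap_comm a b, swap_comm b c]
    _ = swap a c := swap_mul_swap_mul_swap hbc.symm hac.symm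
    _ = swap c a := swap_comm _ _
    _ = swap b c * swap a b * swap b c := (swap_mul_swap_mul_swap hab hac).symm

open Equiv in
lemma swap_commute {α : Type*} [DecidableEq α] {a b c d : α}
    (hac : a ≠ c) (had : a ≠ d) (hbc : b ≠ c) (hbd : b ≠ d) :
    swap a b * swap c d = swap c d * swap a b := by
  ext x
  simp only [Perm.mul_apply, swap_apply_def]
  split_ifs <;> simp_all

/-- `XX a b = (e_a + e_b, swap a b)`. -/
def XX {n : ℕ} (a b : Fin n) : GEGroup n :=
  ⟨Multiplicative.ofAdd (Pi.single a 1 + Pi.single b 1), Equiv.swap a b⟩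

open SemidirectProduct Equiv in
lemma XX_braid {n : ℕ} {a b c : Fin n} (hab : a ≠ b) (hac : a ≠ c) (hbc : b ≠ c) :
    XX a b * XX b c * XX a b = XX b c * XX a b * XX b c := by
  ext1
  · simp only [XX, mul_left, mul_right, permAct_single_add,
      Perm.mul_apply, swap_apply_left, swap_apply_right,
      swap_apply_of_ne_of_ne hac.symm hbc.symm,
      swap_apply_of_ne_of_ne hab hac]
    apply Multiplicative.toAdd.injective
    simp only [toAdd_mul, toAdd_ofAdd, swap_apply_left, swap_apply_right]
    abel
  · simp only [XX, mul_right]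
    exact swap_braid hab hac hbc

open SemidirectProduct Equiv in
lemma XX_commute {n : ℕ} {a b c d : Fin n}
    (hac : a ≠ c) (had : a ≠ d) (hbc : b ≠ c) (hbd : b ≠ d) :
    XX a b * XX c d = XX c d * (XX a b : GEGroup n) := by
  ext1
  · simp only [XX, mul_left, permAct_single_add,
      swap_apply_of_ne_of_ne hac.symm hbc.symm, swap_apply_of_ne_of_ne had.symm hbd.symm,
      swap_apply_of_ne_of_ne hac had, swap_apply_of_ne_of_ne hbc hbd]
    apply Multiplicative.toAdd.injective
    simp only [toAdd_mul, toAdd_ofAdd]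
    abel
  · simp only [XX, mul_right]
    exact swap_commute hac had hbc hbd

lemma ϖGen_eq_XX {n : ℕ} (k : Fin (n - 1)) : ϖGen k = XX (lo k) (hi k) := rfl

lemma lo_ne_hi {n : ℕ} (k : Fin (n - 1)) : lo k ≠ hi k := by
  simp [lo, hi, Fin.ext_iff]

/-- The map `ι` as a permutation. -/
def iotaFun {n : ℕ} (x : GEGroup n) : Equiv.Perm (Fin n × ℤ) where
  toFun p := (x.right p.1, p.2 + Multiplicative.toAdd x.left (x.right p.1))
  invFun p := (x.right⁻¹ p.1, p.2 - Multiplicative.toAdd x.left p.1)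
  left_inv p := by simp
  right_inv p := by simp

/-- The map `ι` as a monoid hom. -/
def iotaHom (n : ℕ) : GEGroup n →* Equiv.Perm (Fin n × ℤ) where
  toFun := iotaFun
  map_one' := by
    ext p : 1
    simp [iotaFun]
  map_mul' x y := by
    ext p : 1
    refine Prod.ext ?_ ?_
    · simp [iotaFun, Equiv.Perm.mul_apply, SemidirectProduct.mul_right]
    · show p.2 + Multiplicative.toAdd (x * y).left ((x * y).right p.1) =
        (p.2 + Multiplicative.toAdd y.left (y.right p.1)) +
          Multiplicative.toAdd x.left (x.right (y.right p.1))
      rw [SemidirectProduct.mul_left, toAdd_mul, Pi.add_apply, permAct_apply,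
        SemidirectProduct.mul_right]
      simp [Equiv.Perm.mul_apply]
      ring

theorem symmetric_gauss_epple_factors (n : ℕ) (hn : 2 ≤ n) :
    (∃! ϖ : BraidGroup n →* GEGroup n,
      ∀ k : Fin (n - 1), ϖ (braidGen k) = ϖGen k) ∧
    ∃ ι : GEGroup n →* Equiv.Perm (Fin n × ℤ),
      Function.Injective ι ∧
      (∀ (x : GEGroup n) (p : Fin n × ℤ),
        ι x p = (x.right p.1, p.2 + Multiplicative.toAdd x.left (x.right p.1))) ∧
      ∀ ϖ : BraidGroup n →* GEGroup n,
        (∀ k : Fin (n - 1), ϖ (braidGen k) = ϖGen k) →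
        ∀ (k : Fin (n - 1)) (p : Fin n × ℤ), (ι.comp ϖ) (braidGen k) p = symGeFun k p := by
  have hrel : ∀ r ∈ braidRels n, FreeGroup.lift (fun k => ϖGen k : Fin (n-1) → GEGroup n) r = 1 := by
    rintro r (⟨i, j, hij, rfl⟩ | ⟨i, j, hij, rfl⟩)
    · simp only [map_mul, map_inv, FreeGroup.lift_apply_of, mul_inv_eq_one]
      have h3 : hi i = lo j := by simp [hi, lo, Fin.ext_iff, hij]
      rw [ϖGen_eq_XX, ϖGen_eq_XX, h3]
      exact XX_braid (by simp [lo, Fin.ext_iff]; omega)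
        (by simp [lo, hi, Fin.ext_iff]; omega) (lo_ne_hi j)
    · simp only [map_mul, map_inv, FreeGroup.lift_apply_of, mul_inv_eq_one]
      rw [ϖGen_eq_XX, ϖGen_eq_XX]
      exact XX_commute (by simp [lo, Fin.ext_iff]; omega) (by simp [lo, hi, Fin.ext_iff]; omega)
        (by simp [lo, hi, Fin.ext_iff]; omega) (by simp [hi, Fin.ext_iff]; omega)
  refine ⟨⟨PresentedGroup.toGroup hrel, fun k => PresentedGroup.toGroup.of hrel, ?_⟩,
    iotaHom n, ?_, fun x p => rfl, ?_⟩
  · intro g hg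
    exact PresentedGroup.ext fun k => (hg k).trans (PresentedGroup.toGroup.of hrel).symm
  · rw [injective_iff_map_eq_one]
    intro x hx
    have key : ∀ p : Fin n × ℤ,
        (x.right p.1, p.2 + Multiplicative.toAdd x.left (x.right p.1)) = p :=
      fun p => DFunLike.congr_fun hx p
    have hr : ∀ t, x.right t = t := fun t => congrArg Prod.fst (key (t, 0))
    ext1
    · apply Multiplicative.toAdd.injective
      funext t
      have h2 := congrArg Prod.snd (key (t, 0))
      rw [hr t] at h2
      simpa using h2
    · exact Equiv.ext hr
  · intro ϖ hϖ k p
    rw [MonoidHom.comp_apply, hϖ k]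
    show ((Equiv.swap (lo k) (hi k)) p.1,
      p.2 + ((Pi.single (lo k) 1 + Pi.single (hi k) 1 : Fin n → ℤ)) ((Equiv.swap (lo k) (hi k)) p.1)) =
      symGeFun k p
    have hlh := lo_ne_hi k
    unfold symGeFun
    rcases eq_or_ne p.1 (lo k) with h1 | h1
    · simp [h1, Equiv.swap_apply_left, Pi.single_apply, hlh.symm]
    · rcases eq_or_ne p.1 (hi k) with h2 | h2
      · simp [h1, h2, Equiv.swap_apply_right, Pi.single_apply, hlh, hlh.symm]
      · simp [h1, h2, Equiv.swap_apply_of_ne_of_ne h1 h2, Pi.single_apply, h1, h2]
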